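/- Let h : R^m → R be convex and L-Lipschitz, g : R^d → R∪{∞} proper closed convex, and c : R^d → R^m be C¹-smooth with β-Lipschitz Jacobian. Define F(x) = g(x) + h(c(x)) and the linearized model F(z;y) = g(z) + h(c(y) + ∇c(y)(z−y)). Then for all z, y ∈ dom g, |F(z) − F(z;y)| ≤ (Lβ/2)‖z−y‖². -/

import Mathlib

open Set

lemma quad_taylor {E F : Type*} [NormedAddCommGroup E] [InnerProductSpace ℝ E]
    [NormedAddCommGroup F] [NormedSpace ℝ F]
    (c : E → F) (β : ℝ) (hc : ContDiff ℝ 1 c)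
    (hcβ : ∀ x y, ‖fderiv ℝ c x - fderiv ℝ c y‖ ≤ β * ‖x - y‖)
    (z y : E) :
    ‖c z - c y - fderiv ℝ c y (z - y)‖ ≤ β / 2 * ‖z - y‖ ^ 2 := by
  set v := z - y with hv
  set f : ℝ → F := fun t => c (y + t • v) - t • (fderiv ℝ c y v) - c y with hf
  have hdiff : ∀ x, HasFDerivAt c (fderiv ℝ c x) x := fun x =>
    (hc.differentiable one_ne_zero x).hasFDerivAt
  have hcurve : ∀ t : ℝ, HasDerivAt (fun t : ℝ => y + t • v) v t := by
    intro t
    simpa using ((hasDerivAt_id t).smul_const v).const_add y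
  have hf' : ∀ t : ℝ, HasDerivAt f ((fderiv ℝ c (y + t • v) - fderiv ℝ c y) v) t := by
    intro t
    have h1 : HasDerivAt (fun t : ℝ => c (y + t • v)) (fderiv ℝ c (y + t • v) v) t :=
      (hdiff (y + t • v)).comp_hasDerivAt t (hcurve t)
    have h2 : HasDerivAt (fun t : ℝ => t • (fderiv ℝ c y v)) (fderiv ℝ c y v) t := by
      simpa using (hasDerivAt_id t).smul_const (fderiv ℝ c y v)
    simpa [f] using (h1.sub h2).sub_const (c y)
  have hB : ∀ t : ℝ, HasDerivAt (fun t : ℝ => β / 2 * ‖v‖ ^ 2 * t ^ 2)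
      (β * ‖v‖ ^ 2 * t) t := by
    intro t
    have := ((hasDerivAt_pow 2 t).const_mul (β / 2 * ‖v‖ ^ 2))
    refine this.congr_deriv ?_
    ring
  have key := image_norm_le_of_norm_deriv_right_le_deriv_boundary
    (a := (0 : ℝ)) (b := 1) (f := f)
    (f' := fun t => (fderiv ℝ c (y + t • v) - fderiv ℝ c y) v)
    (fun t _ => (hf' t).continuousAt.continuousWithinAt)
    (fun t _ => (hf' t).hasDerivWithinAt)
    (B := fun t => β / 2 * ‖v‖ ^ 2 * t ^ 2) (B' := fun t => β * ‖v‖ ^ 2 * t)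
    (by simp [f]) hB
    (by
      intro t ht
      calc ‖(fderiv ℝ c (y + t • v) - fderiv ℝ c y) v‖
          ≤ ‖fderiv ℝ c (y + t • v) - fderiv ℝ c y‖ * ‖v‖ :=
            (fderiv ℝ c (y + t • v) - fderiv ℝ c y).le_opNorm v
        _ ≤ (β * ‖(y + t • v) - y‖) * ‖v‖ := by
            gcongr; exact hcβ _ _
        _ = β * ‖v‖ ^ 2 * t := by
            have : ‖(y + t • v) - y‖ = t * ‖v‖ := by
              simp [norm_smul, abs_of_nonneg ht.1]
            rw [this]; ring)
  have := key (right_mem_Icc.mpr zero_le_one)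
  simp only [f, one_smul, one_pow, mul_one] at this
  rw [show y + v = z from by simp [hv]] at this
  rw [sub_right_comm]
  exact this

theorem composite_model_error {d m : ℕ}
    (g : EuclideanSpace ℝ (Fin d) → ℝ)
    (h : EuclideanSpace ℝ (Fin m) → ℝ)
    (c : EuclideanSpace ℝ (Fin d) → EuclideanSpace ℝ (Fin m))
    (L β : ℝ) (hL : 0 ≤ L) (hβ : 0 ≤ β)
    (hg : ConvexOn ℝ Set.univ g) (hgc : LowerSemicontinuous g)
    (hh : ConvexOn ℝ Set.univ h)
    (hhL : ∀ u v, |h u - h v| ≤ L * ‖u - v‖)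
    (hc : ContDiff ℝ 1 c)
    (hcβ : ∀ x y, ‖fderiv ℝ c x - fderiv ℝ c y‖ ≤ β * ‖x - y‖) :
    ∀ z y : EuclideanSpace ℝ (Fin d),
      |(g z + h (c z)) - (g z + h (c y + fderiv ℝ c y (z - y)))| ≤
        (L * β / 2) * ‖z - y‖ ^ 2 := by
  intro z y
  have h1 : |(g z + h (c z)) - (g z + h (c y + fderiv ℝ c y (z - y)))|
      = |h (c z) - h (c y + fderiv ℝ c y (z - y))| := by ring_nf
  rw [h1]
  calc |h (c z) - h (c y + fderiv ℝ c y (z - y))|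
      ≤ L * ‖c z - (c y + fderiv ℝ c y (z - y))‖ := hhL _ _
    _ ≤ L * (β / 2 * ‖z - y‖ ^ 2) := by
        gcongr
        have := quad_taylor c β hc hcβ z y
        simpa [sub_add_eq_sub_sub] using this
    _ = (L * β / 2) * ‖z - y‖ ^ 2 := by ring
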